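/- Let S be a type, P : S → S → ℝ a stochastic matrix, c : S → ℝ bounded, γ ∈ (0,1), and ν a sub-probability measure on the positive integers. Then for every bounded function Q₀ : S → ℝ, the iterates Q_{n+1} = T^ν Q_n defined by the ν-Bellman operator converge uniformly to the value function Q^π, i.e., sup_{x ∈ S} |Q_n(x) − Q^π(x)| → 0 as n → ∞. -/

import Mathlib

/-- `ξ^ν(k) = γ^(k−1) − ∑_{κ=0}^{k−1} γ^κ · ν(k−κ)`. -/
noncomputable def xiNu (γ : ℝ) (ν : ℕ → ℝ) (k : ℕ) : ℝ :=
  γ ^ (k - 1) - ∑ κ ∈ Finset.range k, γ ^ κ * ν (k - κ)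

/-- A sub-probability measure on the positive integers. -/
def IsSubProbPNat (ν : ℕ → ℝ) : Prop :=
  ν 0 = 0 ∧ (∀ k, 0 ≤ ν k) ∧ Summable ν ∧ ∑' k, ν k ≤ 1

lemma tsum_nat_prod_antidiagonal {F : ℕ × ℕ → ℝ} (hF : Summable F) :
    ∑' p : ℕ × ℕ, F p = ∑' n, ∑ kl ∈ Finset.HasAntidiagonal.antidiagonal n, F kl := by
  rw [← Finset.HasAntidiagonal.sigmaAntidiagonalEquivProd.tsum_eq F]
  rw [show (fun c => F (Finset.HasAntidiagonal.sigmaAntidiagonalEquivProd c)) =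
      (F ∘ Finset.HasAntidiagonal.sigmaAntidiagonalEquivProd) from rfl]
  rw [Summable.tsum_sigma' (fun n => (hasSum_fintype _).summable)
      (Finset.HasAntidiagonal.sigmaAntidiagonalEquivProd.summable_iff.mpr hF)]
  congr 1
  ext n
  rw [tsum_fintype]
  exact Finset.sum_finset_coe (fun kl => F kl) _

lemma summable_antidiagonal_of_summable' {F : ℕ × ℕ → ℝ} (hF : Summable F) :
    Summable fun n => ∑ kl ∈ Finset.HasAntidiagonal.antidiagonal n, F kl := by
  have h := (Finset.HasAntidiagonal.sigmaAntidiagonalEquivProd.summable_iff.mpr hF).sigma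
  refine h.congr fun n => Eq.symm ?_
  rw [tsum_fintype]
  exact (Finset.sum_finset_coe (fun kl => F kl) _).symm

set_option maxHeartbeats 2000000

lemma abs_tsum_le' {ι : Type*} {f : ι → ℝ} (hf : Summable fun i => |f i|) :
    |∑' i, f i| ≤ ∑' i, |f i| := by
  simpa [Real.norm_eq_abs] using
    norm_tsum_le_tsum_norm (f := f) (by simpa [Real.norm_eq_abs] using hf)

/-- For every bounded `Q₀`, the iterates of the ν-Bellman operator converge
uniformly to the value function `Q^π`. -/
theorem nuBellman_iterates_tendsto_value
    {S : Type*} [DecidableEq S] (P : S → S → ℝ)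
    (hP_nonneg : ∀ x y, 0 ≤ P x y)
    (hP_summable : ∀ x, Summable (P x))
    (hP_sum : ∀ x, ∑' y, P x y = 1)
    (Pk : ℕ → S → S → ℝ)
    (hPk_zero : ∀ x y, Pk 0 x y = if x = y then 1 else 0)
    (hPk_succ : ∀ k x y, Pk (k + 1) x y = ∑' z, P x z * Pk k z y)
    (c : S → ℝ) (hc : ∃ C, ∀ x, |c x| ≤ C)
    (γ : ℝ) (hγ : γ ∈ Set.Ioo (0 : ℝ) 1)
    (ν : ℕ → ℝ) (hν : IsSubProbPNat ν)
    (Qpi : S → ℝ)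
    (hQpi : ∀ x, Qpi x = ∑' k : ℕ, γ ^ k * ∑' y, Pk k x y * c y)
    (T : (S → ℝ) → S → ℝ)
    (hT : ∀ Q x, T Q x = c x + γ * ∑' k : ℕ,
      (xiNu γ ν (k + 1) * ∑' y, Pk (k + 1) x y * c y
        + ν (k + 1) * ∑' y, Pk (k + 1) x y * Q y))
    (Q : ℕ → S → ℝ) (hQ0 : ∃ B, ∀ x, |Q 0 x| ≤ B)
    (hQrec : ∀ n, Q (n + 1) = T (Q n)) :
    Filter.Tendsto (fun n => ⨆ x, |Q n x - Qpi x|) Filter.atTop (nhds 0) := by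
  obtain ⟨hγ0, hγ1⟩ := hγ
  obtain ⟨hν0, hνnn, hνsum, hνle⟩ := hν
  obtain ⟨C₀, hC₀⟩ := hc
  set C := max C₀ 0 with hCdef
  have hC : ∀ x, |c x| ≤ C := fun x => (hC₀ x).trans (le_max_left _ _)
  have hC0 : (0:ℝ) ≤ C := le_max_right _ _
  have hγ0' : (0:ℝ) ≤ γ := le_of_lt hγ0
  -- row properties of the k-step kernels
  have hrow : ∀ k x, (∀ y, 0 ≤ Pk k x y) ∧ Summable (Pk k x) ∧ ∑' y, Pk k x y = 1 := by
    intro k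
    induction k with
    | zero =>
      intro x
      have he : Pk 0 x = fun y => if y = x then (1:ℝ) else 0 := by
        funext y; rw [hPk_zero]; simp [eq_comm]
      refine ⟨?_, ?_, ?_⟩
      · intro y; rw [he]; positivity
      · rw [he]
        exact summable_of_ne_finset_zero (s := {x}) (by intro y hy; simp at hy; simp [hy])
      · rw [he]; exact tsum_ite_eq x 1
    | succ k ih =>
      intro x
      have hFnn : ∀ p : S × S, 0 ≤ P x p.1 * Pk k p.1 p.2 :=
        fun p => mul_nonneg (hP_nonneg _ _) ((ih p.1).1 p.2)
      have hFs : Summable (fun p : S × S => P x p.1 * Pk k p.1 p.2) := by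
        refine (summable_prod_of_nonneg hFnn).2 ⟨fun z => show Summable fun y => P x z * Pk k z y from ((ih z).2.1).mul_left _, ?_⟩
        have he : (fun z => ∑' y, P x z * Pk k z y) = fun z => P x z := by
          funext z; rw [tsum_mul_left, (ih z).2.2, mul_one]
        rw [he]; exact hP_summable x
      have hsumm : Summable (Pk (k+1) x) := by
        have h2 := hFs.prod_symm.prod
        have he : (Pk (k+1) x) = fun y => ∑' z, P x z * Pk k z y := by
          funext y; exact hPk_succ k x y
        rw [he]; exact h2
      refine ⟨fun y => by rw [hPk_succ]; exact tsum_nonneg (fun z => hFnn (z,y)), hsumm, ?_⟩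
      calc ∑' y, Pk (k+1) x y = ∑' y, ∑' z, P x z * Pk k z y :=
            tsum_congr fun y => hPk_succ k x y
        _ = ∑' z, ∑' y, P x z * Pk k z y := Summable.tsum_comm hFs
        _ = ∑' z, P x z := tsum_congr fun z => by rw [tsum_mul_left, (ih z).2.2, mul_one]
        _ = 1 := hP_sum x
  have hrow_nn : ∀ k x y, 0 ≤ Pk k x y := fun k x y => (hrow k x).1 y
  have hrow_s : ∀ k x, Summable (Pk k x) := fun k x => (hrow k x).2.1
  have hrow_1 : ∀ k x, ∑' y, Pk k x y = 1 := fun k x => (hrow k x).2.2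
  -- summability and bound for kernel-weighted sums of bounded functions
  have hWs : ∀ (g : S → ℝ) (B : ℝ), (∀ y, |g y| ≤ B) → ∀ k x,
      Summable (fun y => Pk k x y * g y) := by
    intro g B hg k x
    refine Summable.of_abs (Summable.of_nonneg_of_le (fun y => abs_nonneg _) (fun y => ?_)
      ((hrow_s k x).mul_right B))
    rw [abs_mul, abs_of_nonneg (hrow_nn k x y)]
    exact mul_le_mul_of_nonneg_left (hg y) (hrow_nn k x y)
  have hWb : ∀ (g : S → ℝ) (B : ℝ), (∀ y, |g y| ≤ B) → ∀ k x,
      |∑' y, Pk k x y * g y| ≤ B := by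
    intro g B hg k x
    have h1 : Summable (fun y => |Pk k x y * g y|) := (hWs g B hg k x).abs
    calc |∑' y, Pk k x y * g y| ≤ ∑' y, |Pk k x y * g y| := by
          exact abs_tsum_le' h1
      _ ≤ ∑' y, Pk k x y * B := by
          refine Summable.tsum_le_tsum (fun y => ?_) h1 ((hrow_s k x).mul_right B)
          rw [abs_mul, abs_of_nonneg (hrow_nn k x y)]
          exact mul_le_mul_of_nonneg_left (hg y) (hrow_nn k x y)
      _ = B := by rw [tsum_mul_right, hrow_1 k x, one_mul]
  -- Fubini for one application of P
  have hFub : ∀ (g : S → ℝ) (B : ℝ), (∀ y, |g y| ≤ B) → ∀ k x,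
      ∑' y, (∑' z, P x z * Pk k z y) * g y = ∑' z, P x z * ∑' y, Pk k z y * g y := by
    intro g B hg k x
    set B' := max B 0 with hB'
    have hg' : ∀ y, |g y| ≤ B' := fun y => (hg y).trans (le_max_left _ _)
    have hB'0 : (0:ℝ) ≤ B' := le_max_right _ _
    have hGnn : ∀ p : S × S, 0 ≤ P x p.1 * Pk k p.1 p.2 * B' :=
      fun p => mul_nonneg (mul_nonneg (hP_nonneg _ _) (hrow_nn _ _ _)) hB'0
    have hGs : Summable (fun p : S × S => P x p.1 * Pk k p.1 p.2 * B') := by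
      refine (summable_prod_of_nonneg hGnn).2
        ⟨fun z => show Summable fun y => P x z * Pk k z y * B' from ((hrow_s k z).mul_left _).mul_right _, ?_⟩
      have he : (fun z => ∑' y, P x z * Pk k z y * B') = fun z => P x z * B' := by
        funext z; rw [tsum_mul_right, tsum_mul_left, hrow_1 k z, mul_one]
      rw [he]; exact (hP_summable x).mul_right B'
    have hFs2 : Summable (fun p : S × S => P x p.1 * (Pk k p.1 p.2 * g p.2)) := by
      refine Summable.of_abs (Summable.of_nonneg_of_le (fun p => abs_nonneg _)
        (fun p => ?_) hGs)
      rw [abs_mul, abs_mul, abs_of_nonneg (hP_nonneg _ _), abs_of_nonneg (hrow_nn k _ _),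
        ← mul_assoc]
      exact mul_le_mul_of_nonneg_left (hg' _)
        (mul_nonneg (hP_nonneg _ _) (hrow_nn k _ _))
    calc ∑' y, (∑' z, P x z * Pk k z y) * g y
        = ∑' y, ∑' z, P x z * (Pk k z y * g y) := by
          refine tsum_congr fun y => ?_
          rw [← tsum_mul_right]
          exact tsum_congr fun z => by ring
      _ = ∑' z, ∑' y, P x z * (Pk k z y * g y) := Summable.tsum_comm hFs2
      _ = ∑' z, P x z * ∑' y, Pk k z y * g y := tsum_congr fun z => by rw [tsum_mul_left]
  -- composition of kernels against a bounded function
  have hcomp : ∀ (g : S → ℝ) (B : ℝ), (∀ y, |g y| ≤ B) → ∀ n m x,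
      ∑' y, Pk n x y * ∑' z, Pk m y z * g z = ∑' z, Pk (n + m) x z * g z := by
    intro g B hg n
    induction n with
    | zero =>
      intro m x
      rw [zero_add]
      refine (tsum_eq_single x (fun y hy => ?_)).trans ?_
      · rw [hPk_zero, if_neg (fun h => hy h.symm), zero_mul]
      · rw [hPk_zero, if_pos rfl, one_mul]
    | succ n ihn =>
      intro m x
      calc ∑' y, Pk (n+1) x y * ∑' z, Pk m y z * g z
          = ∑' y, (∑' z, P x z * Pk n z y) * ∑' z, Pk m y z * g z :=
            tsum_congr fun y => by rw [hPk_succ]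
        _ = ∑' z, P x z * ∑' y, Pk n z y * ∑' w, Pk m y w * g w :=
            hFub _ B (fun y => hWb g B hg m y) n x
        _ = ∑' z, P x z * ∑' w, Pk (n+m) z w * g w :=
            tsum_congr fun z => by rw [ihn m z]
        _ = ∑' w, (∑' z, P x z * Pk (n+m) z w) * g w := (hFub g B hg (n+m) x).symm
        _ = ∑' w, Pk (n+1+m) x w * g w := by
            refine tsum_congr fun w => ?_
            rw [show n+1+m = (n+m)+1 from by omega, hPk_succ]
  -- the value sequence V
  set V : ℕ → S → ℝ := fun m x => ∑' y, Pk m x y * c y with hV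
  have hVb : ∀ m x, |V m x| ≤ C := fun m x => hWb c C hC m x
  have hV0 : ∀ x, V 0 x = c x := by
    intro x
    refine (tsum_eq_single x (fun y hy => ?_)).trans ?_
    · rw [hPk_zero, if_neg (fun h => hy h.symm), zero_mul]
    · rw [hPk_zero, if_pos rfl, one_mul]
  have hVcomp : ∀ K m x, ∑' y, Pk K x y * V m y = V (K + m) x :=
    fun K m x => hcomp c C hC K m x
  have hgeo : Summable (fun k : ℕ => γ ^ k) := summable_geometric_of_lt_one hγ0' hγ1
  have hνs1 : Summable (fun k => ν (k+1)) := (summable_nat_add_iff 1).2 hνsum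
  have hνs1_le : ∑' k, ν (k+1) ≤ 1 := by
    have h := Summable.tsum_eq_zero_add hνsum
    rw [hν0, zero_add] at h
    rw [← h]; exact hνle
  -- the convolution sequence
  set Sc : ℕ → ℝ := fun n => ∑ i ∈ Finset.range (n+1), ν (i+1) * γ ^ (n - i) with hSc
  have hprodsum : Summable (fun p : ℕ × ℕ => ν (p.1+1) * γ ^ p.2) :=
    hνs1.mul_of_nonneg hgeo (fun k => hνnn _) (fun j => pow_nonneg hγ0' j)
  have hScs : Summable Sc := by
    have h := summable_antidiagonal_of_summable' hprodsum
    have he : Sc = fun n => ∑ kl ∈ Finset.HasAntidiagonal.antidiagonal n, ν (kl.1+1) * γ ^ kl.2 := by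
      funext n
      rw [Finset.Nat.sum_antidiagonal_eq_sum_range_succ_mk]
    rw [he]; exact h
  have hScnn : ∀ n, 0 ≤ Sc n :=
    fun n => Finset.sum_nonneg fun i _ => mul_nonneg (hνnn _) (pow_nonneg hγ0' _)
  have hxi : ∀ k, xiNu γ ν (k+1) = γ ^ k - Sc k := by
    intro k
    rw [xiNu, Nat.add_sub_cancel]
    congr 1
    rw [hSc]
    beta_reduce
    rw [← Finset.sum_range_reflect (fun i => ν (i+1) * γ ^ (k - i)) (k+1)]
    refine Finset.sum_congr rfl fun j hj => ?_
    have hjk : j ≤ k := Nat.lt_succ_iff.mp (Finset.mem_range.mp hj)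
    have h1 : k + 1 - 1 - j = k - j := by omega
    have h2 : k - j + 1 = k + 1 - j := by omega
    have h3 : k - (k - j) = j := by omega
    rw [h1, h2, h3]
    ring
  have hxiabs : ∀ k, |xiNu γ ν (k+1)| ≤ γ ^ k + Sc k := by
    intro k
    rw [hxi k]
    calc |γ ^ k - Sc k| ≤ |γ ^ k| + |Sc k| := abs_sub _ _
      _ = γ ^ k + Sc k := by
          rw [abs_of_nonneg (pow_nonneg hγ0' _), abs_of_nonneg (hScnn k)]
  -- summability of the pieces of the Bellman sum
  have hA_s : ∀ x, Summable (fun k => xiNu γ ν (k+1) * V (k+1) x) := by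
    intro x
    refine Summable.of_abs (Summable.of_nonneg_of_le (fun k => abs_nonneg _) (fun k => ?_)
      ((hgeo.add hScs).mul_right C))
    rw [abs_mul]
    exact mul_le_mul (hxiabs k) (hVb _ _) (abs_nonneg _)
      (add_nonneg (pow_nonneg hγ0' _) (hScnn k))
  have hB_s : ∀ (Qf : S → ℝ) (B : ℝ), (∀ y, |Qf y| ≤ B) → ∀ x,
      Summable (fun k => ν (k+1) * ∑' y, Pk (k+1) x y * Qf y) := by
    intro Qf B hQf x
    refine Summable.of_abs (Summable.of_nonneg_of_le (fun k => abs_nonneg _) (fun k => ?_)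
      (hνs1.mul_right (max B 0)))
    rw [abs_mul, abs_of_nonneg (hνnn _)]
    exact mul_le_mul_of_nonneg_left ((hWb Qf B hQf _ x).trans (le_max_left _ _)) (hνnn _)
  -- bound on Qpi
  have hQpi' : ∀ x, Qpi x = ∑' k, γ ^ k * V k x := fun x => hQpi x
  have hT' : ∀ Qf x, T Qf x = c x + γ * ∑' k, (xiNu γ ν (k+1) * V (k+1) x
      + ν (k+1) * ∑' y, Pk (k+1) x y * Qf y) := fun Qf x => hT Qf x
  have hVγs : ∀ x, Summable (fun k => γ ^ k * V k x) := by
    intro x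
    refine Summable.of_abs (Summable.of_nonneg_of_le (fun k => abs_nonneg _) (fun k => ?_)
      (hgeo.mul_right C))
    rw [abs_mul, abs_of_nonneg (pow_nonneg hγ0' _)]
    exact mul_le_mul_of_nonneg_left (hVb _ _) (pow_nonneg hγ0' _)
  set CQ : ℝ := (1 - γ)⁻¹ * C with hCQ
  have hQpib : ∀ x, |Qpi x| ≤ CQ := by
    intro x
    rw [hQpi' x]
    calc |∑' k, γ ^ k * V k x| ≤ ∑' k, |γ ^ k * V k x| := by
          exact abs_tsum_le' (hVγs x).abs
      _ ≤ ∑' k : ℕ, γ ^ k * C := by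
          refine Summable.tsum_le_tsum (fun k => ?_) (hVγs x).abs (hgeo.mul_right C)
          rw [abs_mul, abs_of_nonneg (pow_nonneg hγ0' _)]
          exact mul_le_mul_of_nonneg_left (hVb _ _) (pow_nonneg hγ0' _)
      _ = CQ := by rw [tsum_mul_right, tsum_geometric_of_lt_one hγ0' hγ1]
  have hCQ0 : 0 ≤ CQ := mul_nonneg (inv_nonneg.mpr (by linarith)) hC0
  -- the fixed point property
  have hfix : ∀ x, T Qpi x = Qpi x := by
    intro x
    have hQpiSum : ∀ K : ℕ, ∑' y, Pk (K+1) x y * Qpi y = ∑' j, γ ^ j * V (K+1+j) x := by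
      intro K
      have hGs : Summable (fun p : S × ℕ => Pk (K+1) x p.1 * (γ ^ p.2 * C)) := by
        refine (summable_prod_of_nonneg ?_).2
          ⟨fun y => show Summable fun j : ℕ => Pk (K+1) x y * (γ ^ j * C) from Summable.mul_left _ (by simpa using hgeo.mul_right C), ?_⟩
        · intro p
          exact mul_nonneg (hrow_nn _ _ _) (mul_nonneg (pow_nonneg hγ0' _) hC0)
        · have he : (fun y => ∑' j : ℕ, Pk (K+1) x y * (γ ^ j * C))
              = fun y => Pk (K+1) x y * ((1-γ)⁻¹ * C) := by
            funext y
            rw [tsum_mul_left, tsum_mul_right, tsum_geometric_of_lt_one hγ0' hγ1]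
          rw [he]; exact (hrow_s _ x).mul_right _
      have hFs3 : Summable (fun p : S × ℕ => Pk (K+1) x p.1 * (γ ^ p.2 * V p.2 p.1)) := by
        refine Summable.of_abs (Summable.of_nonneg_of_le (fun p => abs_nonneg _)
          (fun p => ?_) hGs)
        rw [abs_mul, abs_mul, abs_of_nonneg (hrow_nn _ _ _),
          abs_of_nonneg (pow_nonneg hγ0' _)]
        exact mul_le_mul_of_nonneg_left
          (mul_le_mul_of_nonneg_left (hVb _ _) (pow_nonneg hγ0' _)) (hrow_nn _ _ _)
      calc ∑' y, Pk (K+1) x y * Qpi y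
          = ∑' y, ∑' j, Pk (K+1) x y * (γ ^ j * V j y) := by
            refine tsum_congr fun y => ?_
            rw [hQpi' y, tsum_mul_left]
        _ = ∑' j, ∑' y, Pk (K+1) x y * (γ ^ j * V j y) := (Summable.tsum_comm (f := fun y j => Pk (K+1) x y * (γ ^ j * V j y)) hFs3).symm
        _ = ∑' j, γ ^ j * ∑' y, Pk (K+1) x y * V j y := by
            refine tsum_congr fun j => ?_
            rw [show (fun y => Pk (K+1) x y * (γ ^ j * V j y))
              = fun y => γ ^ j * (Pk (K+1) x y * V j y) from by funext y; ring,
              tsum_mul_left]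
        _ = ∑' j, γ ^ j * V (K+1+j) x := tsum_congr fun j => by rw [hVcomp (K+1) j x]
    rw [hT' Qpi x]
    rw [Summable.tsum_add (hA_s x) (hB_s Qpi CQ hQpib x)]
    have hFsum : Summable (fun p : ℕ × ℕ => ν (p.1+1) * (γ ^ p.2 * V (p.1+1+p.2) x)) := by
      refine Summable.of_abs (Summable.of_nonneg_of_le (fun p => abs_nonneg _)
        (fun p => ?_) (hprodsum.mul_right C))
      rw [abs_mul, abs_mul, abs_of_nonneg (hνnn _), abs_of_nonneg (pow_nonneg hγ0' _),
        ← mul_assoc]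
      exact mul_le_mul_of_nonneg_left (hVb _ _)
        (mul_nonneg (hνnn _) (pow_nonneg hγ0' _))
    have h2 : ∑' k, ν (k+1) * ∑' y, Pk (k+1) x y * Qpi y = ∑' n, Sc n * V (n+1) x := by
      calc ∑' k, ν (k+1) * ∑' y, Pk (k+1) x y * Qpi y
          = ∑' k, ∑' j, ν (k+1) * (γ ^ j * V (k+1+j) x) := by
            refine tsum_congr fun k => ?_
            rw [hQpiSum k, tsum_mul_left]
        _ = ∑' p : ℕ × ℕ, ν (p.1+1) * (γ ^ p.2 * V (p.1+1+p.2) x) :=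
            (Summable.tsum_prod hFsum).symm
        _ = ∑' n, ∑ kl ∈ Finset.HasAntidiagonal.antidiagonal n, ν (kl.1+1) * (γ ^ kl.2 * V (kl.1+1+kl.2) x) :=
            tsum_nat_prod_antidiagonal hFsum
        _ = ∑' n, Sc n * V (n+1) x := by
            refine tsum_congr fun n => ?_
            rw [Finset.Nat.sum_antidiagonal_eq_sum_range_succ_mk, hSc, Finset.sum_mul]
            refine Finset.sum_congr rfl fun i hi => ?_
            have hin : i ≤ n := Nat.lt_succ_iff.mp (Finset.mem_range.mp hi)
            rw [show i + 1 + (n - i) = n + 1 from by omega]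
            ring
    rw [h2]
    have hScVs : Summable (fun n => Sc n * V (n+1) x) := by
      refine Summable.of_abs (Summable.of_nonneg_of_le (fun n => abs_nonneg _)
        (fun n => ?_) (hScs.mul_right C))
      rw [abs_mul, abs_of_nonneg (hScnn n)]
      exact mul_le_mul_of_nonneg_left (hVb _ _) (hScnn n)
    have h3 : ∑' k, xiNu γ ν (k+1) * V (k+1) x + ∑' n, Sc n * V (n+1) x
        = ∑' k, γ ^ k * V (k+1) x := by
      rw [← Summable.tsum_add (hA_s x) hScVs]
      refine tsum_congr fun k => ?_
      rw [hxi k]; ring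
    rw [h3]
    have h4 : Summable (fun k => γ ^ k * V (k+1) x) := by
      refine Summable.of_abs (Summable.of_nonneg_of_le (fun k => abs_nonneg _)
        (fun k => ?_) (hgeo.mul_right C))
      rw [abs_mul, abs_of_nonneg (pow_nonneg hγ0' _)]
      exact mul_le_mul_of_nonneg_left (hVb _ _) (pow_nonneg hγ0' _)
    rw [hQpi' x, Summable.tsum_eq_zero_add (hVγs x), pow_zero, one_mul, hV0 x]
    congr 1
    rw [← tsum_mul_left]
    refine tsum_congr fun k => ?_
    rw [pow_succ]; ring
  -- the contraction step
  have hstep : ∀ (Qf : S → ℝ) (B D : ℝ), (∀ y, |Qf y| ≤ B) → 0 ≤ D →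
      (∀ y, |Qf y - Qpi y| ≤ D) → ∀ x, |T Qf x - Qpi x| ≤ γ * D := by
    intro Qf B D hB hD0 hQD x
    have hs1 := hB_s Qf B hB x
    have hs2 := hB_s Qpi CQ hQpib x
    have hdiff : ∀ k : ℕ, ν (k+1) * ∑' y, Pk (k+1) x y * Qf y
        - ν (k+1) * ∑' y, Pk (k+1) x y * Qpi y
        = ν (k+1) * ∑' y, Pk (k+1) x y * (Qf y - Qpi y) := by
      intro k
      rw [← mul_sub, ← Summable.tsum_sub (hWs Qf B hB (k+1) x) (hWs Qpi CQ hQpib (k+1) x)]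
      congr 1
      exact tsum_congr fun y => by rw [mul_sub]
    have e1 : T Qf x - Qpi x = γ * ∑' k, ν (k+1) * ∑' y, Pk (k+1) x y * (Qf y - Qpi y) := by
      rw [← hfix x, hT' Qf x, hT' Qpi x,
        Summable.tsum_add (hA_s x) hs1, Summable.tsum_add (hA_s x) hs2]
      have h5 : ∑' k, ν (k+1) * ∑' y, Pk (k+1) x y * (Qf y - Qpi y)
          = (∑' k, ν (k+1) * ∑' y, Pk (k+1) x y * Qf y)
            - ∑' k, ν (k+1) * ∑' y, Pk (k+1) x y * Qpi y := by
        rw [← Summable.tsum_sub hs1 hs2]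
        exact tsum_congr fun k => (hdiff k).symm
      rw [h5]; ring
    rw [e1, abs_mul, abs_of_nonneg hγ0']
    refine mul_le_mul_of_nonneg_left ?_ hγ0'
    have hsummand : Summable (fun k => ν (k+1) * ∑' y, Pk (k+1) x y * (Qf y - Qpi y)) :=
      hB_s _ D hQD x
    calc |∑' k, ν (k+1) * ∑' y, Pk (k+1) x y * (Qf y - Qpi y)|
        ≤ ∑' k, |ν (k+1) * ∑' y, Pk (k+1) x y * (Qf y - Qpi y)| := by
          exact abs_tsum_le' hsummand.abs
      _ ≤ ∑' k, ν (k+1) * D := by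
          refine Summable.tsum_le_tsum (fun k => ?_) hsummand.abs (hνs1.mul_right D)
          rw [abs_mul, abs_of_nonneg (hνnn _)]
          exact mul_le_mul_of_nonneg_left (hWb _ D hQD _ x) (hνnn _)
      _ = (∑' k, ν (k+1)) * D := tsum_mul_right
      _ ≤ 1 * D := mul_le_mul_of_nonneg_right hνs1_le hD0
      _ = D := one_mul D
  -- conclusion
  rcases isEmpty_or_nonempty S with hS | hS
  · have he : ∀ n, (⨆ x, |Q n x - Qpi x|) = 0 := fun n => Real.iSup_of_isEmpty _
    simpa [he] using (tendsto_const_nhds : Filter.Tendsto (fun _ : ℕ => (0:ℝ))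
      Filter.atTop (nhds 0))
  · obtain ⟨B0, hB0⟩ := hQ0
    obtain ⟨x0⟩ := hS
    haveI : Nonempty S := ⟨x0⟩
    set D0 : ℝ := ⨆ x, |Q 0 x - Qpi x| with hD0def
    have hbdd : BddAbove (Set.range fun x => |Q 0 x - Qpi x|) := by
      refine ⟨B0 + CQ, ?_⟩
      rintro r ⟨x, rfl⟩
      calc |Q 0 x - Qpi x| ≤ |Q 0 x| + |Qpi x| := abs_sub _ _
        _ ≤ B0 + CQ := add_le_add (hB0 x) (hQpib x)
    have hDle : ∀ x, |Q 0 x - Qpi x| ≤ D0 := fun x => le_ciSup hbdd x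
    have hD00 : 0 ≤ D0 := le_trans (abs_nonneg _) (hDle x0)
    have hkey : ∀ n x, |Q n x - Qpi x| ≤ γ ^ n * D0 := by
      intro n
      induction n with
      | zero => intro x; simpa using hDle x
      | succ n ihn =>
        intro x
        have hγn : γ ^ n ≤ 1 := pow_le_one₀ hγ0' hγ1.le
        have hQnb : ∀ y, |Q n y| ≤ CQ + D0 := by
          intro y
          calc |Q n y| = |(Q n y - Qpi y) + Qpi y| := by ring_nf
            _ ≤ |Q n y - Qpi y| + |Qpi y| := abs_add_le _ _
            _ ≤ γ ^ n * D0 + CQ := add_le_add (ihn y) (hQpib y)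
            _ ≤ CQ + D0 := by nlinarith
        have h := hstep (Q n) (CQ + D0) (γ ^ n * D0) hQnb
          (mul_nonneg (pow_nonneg hγ0' n) hD00) ihn x
        rw [hQrec n]
        calc |T (Q n) x - Qpi x| ≤ γ * (γ ^ n * D0) := h
          _ = γ ^ (n+1) * D0 := by rw [pow_succ]; ring
    have hub : ∀ n, (⨆ x, |Q n x - Qpi x|) ≤ γ ^ n * D0 :=
      fun n => ciSup_le (α := ℝ) fun x => hkey n x
    have hlb : ∀ n, 0 ≤ ⨆ x, |Q n x - Qpi x| := by
      intro n
      have hbdd' : BddAbove (Set.range fun x => |Q n x - Qpi x|) :=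
        ⟨γ ^ n * D0, by rintro r ⟨x, rfl⟩; exact hkey n x⟩
      exact le_trans (abs_nonneg _) (le_ciSup hbdd' x0)
    have htend : Filter.Tendsto (fun n => γ ^ n * D0) Filter.atTop (nhds 0) := by
      simpa using (tendsto_pow_atTop_nhds_zero_of_lt_one hγ0' hγ1).mul_const D0
    exact tendsto_of_tendsto_of_tendsto_of_le_of_le tendsto_const_nhds htend hlb hub
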